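/- arXiv:2002.01678 — 2 statements merged into one kernel-verified Lean document; each statement's English description precedes it below -/
import Mathlib

section
/- Let ŷ ∈ ℂ^N with ŷ_i ≠ 0 for all i, Y := diag(ŷ/|ŷ|), L := Y*M for M isometric with ŷ = Mx̂, and 𝓛 := (Re(L) −Im(L)) ∈ ℝ^{N×2n}. Then: G(x̂) is a right singular vector with singular value 1, G(−j x̂) is a right singular vector with singular value 0, and |ŷ| is the left singular vector corresponding to singular value 1; in particular 𝓛 G(x̂) = |ŷ|, 𝓛 G(−j x̂) = 0, and 𝓛ᵀ|ŷ| = G(x̂) (after normalization ‖x̂‖ = ‖ŷ‖ = 1). -/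
open Matrix
open scoped BigOperators

/-- Spectral facts for `𝓛 = (Re L  −Im L)` with `L = Y* M`, `Y = diag(ŷ/|ŷ|)`, `ŷ = M x̂`:
`G(x̂)` is a right singular vector with singular value 1 and left singular vector `|ŷ|`,
and `G(−j x̂)` is a right singular vector with singular value 0. -/
theorem stmt12 (n N : ℕ) (M : Matrix (Fin N) (Fin n) ℂ) (hM : Mᴴ * M = 1)
    (xhat : Fin n → ℂ) (hxhat : ∑ j, ‖xhat j‖ ^ 2 = 1)
    (yhat : Fin N → ℂ) (hyhat : yhat = M.mulVec xhat) (hy0 : ∀ i, yhat i ≠ 0)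
    (L : Matrix (Fin N) (Fin n) ℂ)
    (hL : L = fun i j => (starRingEnd ℂ) (yhat i / (‖yhat i‖ : ℂ)) * M i j)
    (cal : Matrix (Fin N) (Fin n ⊕ Fin n) ℝ)
    (hcal : cal = fun i => Sum.elim (fun j => (L i j).re) (fun j => -(L i j).im))
    (G : (Fin n → ℂ) → (Fin n ⊕ Fin n → ℝ))
    (hG : G = fun x => Sum.elim (fun j => (x j).re) (fun j => (x j).im)) :
    cal.mulVec (G xhat) = (fun i => ‖yhat i‖) ∧
    cal.mulVec (G (fun j => -(Complex.I * xhat j))) = 0 ∧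
    cal.transpose.mulVec (fun i => ‖yhat i‖) = G xhat := by
  have hMy : Mᴴ.mulVec yhat = xhat := by
    rw [hyhat, mulVec_mulVec, hM, one_mulVec]
  have ha0 : ∀ i, ((‖yhat i‖ : ℝ) : ℂ) ≠ 0 := fun i => by
    simpa using hy0 i
  -- key identity 1
  have key1 : ∀ i, ∑ j, L i j * xhat j = ((‖yhat i‖ : ℝ) : ℂ) := by
    intro i
    have h1 : ∑ j, L i j * xhat j
        = (starRingEnd ℂ) (yhat i / (‖yhat i‖ : ℂ)) * yhat i := by
      rw [hL]
      simp only [mul_assoc, ← Finset.mul_sum]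
      congr 1
      rw [hyhat]; rfl
    rw [h1, map_div₀, Complex.conj_ofReal]
    rw [div_mul_eq_mul_div, mul_comm, Complex.mul_conj]
    rw [Complex.normSq_eq_norm_sq]
    field_simp
    rw [Complex.ofReal_pow, sq, mul_div_assoc, div_self (ha0 i), mul_one]
  -- key identity 2
  have key2 : ∀ j, ∑ i, L i j * ((‖yhat i‖ : ℝ) : ℂ)
      = (starRingEnd ℂ) (xhat j) := by
    intro j
    have h1 : ∀ i, L i j * ((‖yhat i‖ : ℝ) : ℂ)
        = (starRingEnd ℂ) (yhat i) * M i j := by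
      intro i
      simp only [hL]
      rw [map_div₀, Complex.conj_ofReal]
      field_simp
      rw [mul_div_assoc, mul_assoc, mul_div_left_comm, div_self (ha0 i), mul_one]
    simp only [h1]
    have h2 : (starRingEnd ℂ) (xhat j) = (starRingEnd ℂ) (Mᴴ.mulVec yhat j) := by
      rw [hMy]
    rw [h2]
    simp [Matrix.mulVec, dotProduct, Matrix.conjTranspose_apply, mul_comm]
  -- real-part reductions
  have sum1 : ∀ (x : Fin n → ℂ) (i : Fin N),
      cal.mulVec (G x) i = (∑ j, L i j * x j).re := by
    intro x i
    simp [hcal, hG, Matrix.mulVec, dotProduct, Fintype.sum_sum_type,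
      Complex.re_sum, Complex.mul_re, Finset.sum_sub_distrib, Finset.sum_add_distrib]
    ring
  refine ⟨?_, ?_, ?_⟩
  · funext i
    rw [sum1, key1, Complex.ofReal_re]
  · funext i
    rw [sum1]
    have : ∑ j, L i j * -(Complex.I * xhat j)
        = -Complex.I * ((‖yhat i‖ : ℝ) : ℂ) := by
      rw [← key1, Finset.mul_sum]
      congr 1; funext j; ring
    rw [this]
    simp
  · funext k
    cases k with
    | inl j =>
      have : (cal.transpose.mulVec (fun i => ‖yhat i‖)) (Sum.inl j)
          = (∑ i, L i j * ((‖yhat i‖ : ℝ) : ℂ)).re := by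
        simp [hcal, Matrix.mulVec, dotProduct, Matrix.transpose_apply, Matrix.transpose,
          Complex.re_sum, Complex.mul_re]
      rw [this, key2]
      simp [hG]
    | inr j =>
      have : (cal.transpose.mulVec (fun i => ‖yhat i‖)) (Sum.inr j)
          = -(∑ i, L i j * ((‖yhat i‖ : ℝ) : ℂ)).im := by
        simp [hcal, Matrix.mulVec, dotProduct, Matrix.transpose_apply, Matrix.transpose,
          Complex.im_sum, Complex.mul_im]
      rw [this, key2]
      simp [hG]
end

section
/- Let ŷ ∈ ℂ^N with all coordinates nonzero, Y := diag(ŷ/|ŷ|), and for y ∈ ℂ^N with y*ŷ ≠ 0 set α := (y*ŷ)/|y*ŷ| and η := Y*(αy − ŷ). Then ⟨η, j|ŷ|⟩ = 0, i.e. η is orthogonal to j|ŷ| in the real inner product Re⟨·,·⟩; consequently Im(η) is orthogonal to |ŷ| in ℝ^N. -/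
open scoped BigOperators ComplexInnerProductSpace

/-- With `α := (y*ŷ)/|y*ŷ|` and `η := Y*(αy − ŷ)`, one has `⟨η, j|ŷ|⟩ = 0`
(real-part orthogonality); consequently `Im(η) ⟂ |ŷ|` in `ℝ^N`. -/
theorem stmt14 (N : ℕ) (yhat : EuclideanSpace ℂ (Fin N)) (hy0 : ∀ i, yhat i ≠ 0)
    (y : EuclideanSpace ℂ (Fin N)) (h : ⟪y, yhat⟫ ≠ 0)
    (α : ℂ) (hα : α = ⟪y, yhat⟫ / (‖⟪y, yhat⟫‖ : ℂ))
    (η : Fin N → ℂ)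
    (hη : η = fun i =>
      (starRingEnd ℂ) (yhat i / (‖yhat i‖ : ℂ)) * (α * y i - yhat i)) :
    (∑ i, (starRingEnd ℂ) (η i) * (Complex.I * (‖yhat i‖ : ℂ))).re = 0 ∧
    ∑ i, (η i).im * ‖yhat i‖ = 0 := by
  set s : ℂ := ⟪y, yhat⟫ with hs
  have key : ∀ i, (starRingEnd ℂ) (η i) * (Complex.I * (‖yhat i‖ : ℂ))
      = Complex.I * ((starRingEnd ℂ) α * (yhat i * (starRingEnd ℂ) (y i))
          - ((‖yhat i‖ : ℝ) ^ 2 : ℝ)) := by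
    intro i
    have habs : (‖yhat i‖ : ℂ) ≠ 0 := by
      exact_mod_cast norm_ne_zero_iff.mpr (hy0 i)
    have hmc : yhat i * (starRingEnd ℂ) (yhat i)
        = ((‖yhat i‖ : ℝ) ^ 2 : ℝ) := by
      rw [Complex.mul_conj']
      push_cast
      ring
    simp only [hη]
    simp only [map_mul, map_sub, map_div₀, Complex.conj_conj, Complex.conj_ofReal]
    field_simp
    ring_nf
    rw [hmc]
  have hsum : ∑ i, yhat i * (starRingEnd ℂ) (y i) = s := by
    rw [hs, PiLp.inner_apply]
    simp [RCLike.inner_apply, mul_comm]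
  have hαs : (starRingEnd ℂ) α * s = (‖s‖ : ℂ) := by
    rw [hα]
    rw [map_div₀, Complex.conj_ofReal]
    rw [div_mul_eq_mul_div, Complex.conj_mul', sq]
    have : (‖s‖ : ℂ) ≠ 0 := by
      exact_mod_cast norm_ne_zero_iff.mpr h
    field_simp
  have main : (∑ i, (starRingEnd ℂ) (η i) * (Complex.I * (‖yhat i‖ : ℂ))).re = 0 := by
    have : ∑ i, (starRingEnd ℂ) (η i) * (Complex.I * (‖yhat i‖ : ℂ))
        = Complex.I * ((‖s‖ : ℂ) - ((∑ i, ‖yhat i‖ ^ 2 : ℝ) : ℂ)) := by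
      simp only [key]
      rw [← Finset.mul_sum, Finset.sum_sub_distrib, ← Finset.mul_sum, hsum, hαs]
      push_cast
      ring
    rw [this]
    simp [Complex.mul_re, pow_two]
  refine ⟨main, ?_⟩
  rw [← main, Complex.re_sum]
  apply Finset.sum_congr rfl
  intro i _
  simp [Complex.mul_re, Complex.mul_im]
end
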